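/- Single-measure Röwbottom lemma: if U is a normal ultrafilter on a measurable cardinal κ and f : [κ]^{<ω} → τ with τ < κ, then there exists A ∈ U such that f is constant on [A]^n for each n < ω. -/
import Mathlib


open Cardinal Set

/-- `U` is a `κ`-complete normal (nonprincipal) ultrafilter on the linearly ordered set `O`
(which represents the measurable cardinal `κ`). -/
def IsNormalMeasure (κ : Cardinal) {O : Type} [LinearOrder O] (U : Set (Set O)) : Prop :=
  (univ : Set O) ∈ U ∧ (∅ : Set O) ∉ U ∧
  (∀ A B : Set O, A ∈ U → A ⊆ B → B ∈ U) ∧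
  (∀ A : Set O, A ∈ U ∨ Aᶜ ∈ U) ∧
  (∀ (ι : Type) (_ : Cardinal.mk ι < κ) (A : ι → Set O), (∀ i, A i ∈ U) → (⋂ i, A i) ∈ U) ∧
  (∀ A : O → Set O, (∀ β, A β ∈ U) → {γ : O | ∀ β, β < γ → γ ∈ A β} ∈ U) ∧
  (∀ b : O, {x : O | b < x} ∈ U)

section Aux

variable {O : Type} [LinearOrder O] {κ : Cardinal} {U : Set (Set O)}

lemma nm_nonempty (hU : IsNormalMeasure κ U) {A : Set O} (hA : A ∈ U) : A.Nonempty := by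
  rcases A.eq_empty_or_nonempty with h | h
  · exact absurd (h ▸ hA) hU.2.1
  · exact h

lemma nm_inter (hκ : Cardinal.aleph 0 < κ) (hU : IsNormalMeasure κ U) {A B : Set O}
    (hA : A ∈ U) (hB : B ∈ U) : A ∩ B ∈ U := by
  have h2 : Cardinal.mk Bool < κ := by
    rw [Cardinal.mk_bool]
    calc (2 : Cardinal) < ℵ₀ := by exact_mod_cast Cardinal.nat_lt_aleph0 2
      _ = Cardinal.aleph 0 := Cardinal.aleph_zero.symm
      _ < κ := hκ
  have h := hU.2.2.2.2.1 Bool h2 (fun b => if b then A else B)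
    (by intro b; cases b <;> simpa)
  refine hU.2.2.1 _ _ h ?_
  intro x hx
  simp only [mem_iInter] at hx
  exact ⟨by simpa using hx true, by simpa using hx false⟩

lemma nm_exists_gt (hκ : Cardinal.aleph 0 < κ) (hU : IsNormalMeasure κ U) {A : Set O}
    (hA : A ∈ U) (b : O) : ∃ x ∈ A, b < x := by
  have h := nm_inter hκ hU hA (hU.2.2.2.2.2.2 b)
  obtain ⟨x, hx⟩ := nm_nonempty hU h
  exact ⟨x, hx.1, hx.2⟩

lemma nm_exists_mono (hκ : Cardinal.aleph 0 < κ) (hU : IsNormalMeasure κ U) {A : Set O}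
    (hA : A ∈ U) : ∀ (n : ℕ) (b : O),
    ∃ v : Fin n → O, StrictMono v ∧ (∀ i, v i ∈ A) ∧ (∀ i, b < v i) := by
  intro n
  induction n with
  | zero =>
    intro b
    exact ⟨Fin.elim0, fun i => i.elim0, fun i => i.elim0, fun i => i.elim0⟩
  | succ n ih =>
    intro b
    obtain ⟨x, hxA, hbx⟩ := nm_exists_gt hκ hU hA b
    obtain ⟨v, hv, hvA, hvx⟩ := ih x
    refine ⟨Fin.cons x v, ?_, ?_, ?_⟩
    · intro i j hij
      rcases Fin.eq_zero_or_eq_succ j with rfl | ⟨j', rfl⟩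
      · exact absurd hij (by simp)
      · rcases Fin.eq_zero_or_eq_succ i with rfl | ⟨i', rfl⟩
        · simpa using hvx j'
        · simpa using hv (by exact_mod_cast Fin.succ_lt_succ_iff.mp hij)
    · intro i
      rcases Fin.eq_zero_or_eq_succ i with rfl | ⟨i', rfl⟩
      · simpa using hxA
      · simpa using hvA i'
    · intro i
      rcases Fin.eq_zero_or_eq_succ i with rfl | ⟨i', rfl⟩
      · simpa using hbx
      · simpa using hbx.trans (hvx i')

lemma nm_fiber {σ : Type} (hσ : Cardinal.mk σ < κ) (hU : IsNormalMeasure κ U)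
    (c : O → σ) : ∃ s, {x | c x = s} ∈ U := by
  by_contra h
  push_neg at h
  have hc : ∀ s, {x | c x = s}ᶜ ∈ U := fun s => (hU.2.2.2.1 _).resolve_left (h s)
  have hmem := hU.2.2.2.2.1 σ hσ _ hc
  have he : (⋂ s, {x : O | c x = s}ᶜ) = ∅ := by
    ext x
    simp only [mem_iInter, mem_compl_iff, mem_setOf_eq, mem_empty_iff_false, iff_false,
      not_forall, not_not]
    exact ⟨c x, rfl⟩
  rw [he] at hmem
  exact hU.2.1 hmem

lemma nm_key {σ : Type} (hσ : Cardinal.mk σ < κ) (hκ : Cardinal.aleph 0 < κ)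
    (hU : IsNormalMeasure κ U) :
    ∀ (n : ℕ) (g : (Fin n → O) → σ), ∃ A ∈ U, ∀ v w : Fin n → O,
      StrictMono v → StrictMono w →
      (∀ i, v i ∈ A) → (∀ i, w i ∈ A) → g v = g w := by
  intro n
  induction n with
  | zero =>
    intro g
    exact ⟨univ, hU.1, fun v w _ _ _ _ => by rw [Subsingleton.elim v w]⟩
  | succ n ih =>
    intro g
    have hA : ∀ β : O, ∃ A ∈ U, ∀ v w : Fin n → O, StrictMono v → StrictMono w →
        (∀ i, v i ∈ A) → (∀ i, w i ∈ A) → g (Fin.cons β v) = g (Fin.cons β w) :=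
      fun β => ih (fun s => g (Fin.cons β s))
    choose A hAU hAhom using hA
    have hD : {γ : O | ∀ β, β < γ → γ ∈ A β} ∈ U := hU.2.2.2.2.2.1 A hAU
    have hw : ∀ β : O, ∃ v : Fin n → O, StrictMono v ∧ (∀ i, v i ∈ A β) ∧ (∀ i, β < v i) :=
      fun β => nm_exists_mono hκ hU (hAU β) n β
    choose w hwm hwA hwb using hw
    obtain ⟨s₀, hs₀⟩ := nm_fiber hσ hU (fun β => g (Fin.cons β (w β)))
    set X : Set O := {γ : O | ∀ β, β < γ → γ ∈ A β} ∩ {x | g (Fin.cons x (w x)) = s₀} with hX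
    have hXU : X ∈ U := nm_inter hκ hU hD hs₀
    have main : ∀ v : Fin (n + 1) → O, StrictMono v → (∀ i, v i ∈ X) → g v = s₀ := by
      intro v hv hvX
      have ht : StrictMono (Fin.tail v) := fun i j hij =>
        hv (Fin.succ_lt_succ_iff.mpr hij)
      have htA : ∀ i, Fin.tail v i ∈ A (v 0) := by
        intro i
        have h1 : v i.succ ∈ {γ : O | ∀ β, β < γ → γ ∈ A β} := (hvX i.succ).1
        exact h1 (v 0) (hv i.succ_pos)
      have h2 : g (Fin.cons (v 0) (Fin.tail v)) = g (Fin.cons (v 0) (w (v 0))) :=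
        hAhom (v 0) _ _ ht (hwm (v 0)) htA (hwA (v 0))
      have h3 : g (Fin.cons (v 0) (w (v 0))) = s₀ := (hvX 0).2
      rw [← Fin.cons_self_tail v, h2, h3]
    exact ⟨X, hXU, fun v w' hv hw' hvX hw'X => by rw [main v hv hvX, main w' hw' hw'X]⟩

end Aux

/-- Single-measure Röwbottom lemma: if `U` is a normal measure on the measurable cardinal
`κ` (carried by `O`) and `f : [κ]^{<ω} → σ` with `|σ| = τ < κ`, then there is `A ∈ U`
such that `f` is constant on `[A]^n` for every `n < ω`. -/
theorem stmt4 {O : Type} [LinearOrder O] (κ : Cardinal) (hO : Cardinal.mk O = κ)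
    (hκ : Cardinal.aleph 0 < κ)
    {σ : Type} (hσ : Cardinal.mk σ < κ)
    (U : Set (Set O)) (hU : IsNormalMeasure κ U)
    (f : {n : ℕ} → (Fin n → O) → σ) :
    ∃ A ∈ U, ∀ (n : ℕ) (v w : Fin n → O),
      StrictMono v → StrictMono w →
      (∀ i, v i ∈ A) → (∀ i, w i ∈ A) → f v = f w := by
  have key := fun n => nm_key hσ hκ hU n (@f n)
  choose A hAU hAhom using key
  refine ⟨⋂ n, A n, ?_, ?_⟩
  · refine hU.2.2.2.2.1 ℕ ?_ A hAU
    rw [Cardinal.mk_nat, ← Cardinal.aleph_zero]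
    exact hκ
  · intro n v w hv hw hvA hwA
    exact hAhom n v w hv hw (fun i => mem_iInter.mp (hvA i) n)
      (fun i => mem_iInter.mp (hwA i) n)
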